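/- Let (X, ≤) be a nonempty finite poset and for each x ∈ X let Ω_x be a finite set with |Ω_x| ≥ 2. On Ω = ∏_{x∈X} Ω_x, define for each antichain Y ⊆ X the relation R(Y) consisting of pairs (α, β) ∈ Ω × Ω such that α_x = β_x for all x ∉ Y ∪ Down(Y), and α_x ≠ β_x for all x ∈ Y, where Down(Y) = {x : x < y for some y ∈ Y}. Then the relations R(Y), as Y ranges over all antichains of X, partition Ω × Ω; R(∅) is the diagonal; each R(Y) is symmetric; and the intersection numbers |{γ ∈ Ω : (α,γ) ∈ R(Y), (γ,β) ∈ R(Z)}| depend only on Y, Z, and the antichain W with (α,β) ∈ R(W). That is, {R(Y)} forms a symmetric association scheme on Ω (the generalized wreath product of the trivial one-class schemes on the Ω_x over X). -/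
import Mathlib


open Matrix

namespace SchubertCell

/-- The strict down-set of a subset of a poset. -/
def Down {X : Type*} [Preorder X] (Y : Set X) : Set X := {x | ∃ y ∈ Y, x < y}

variable {F : Type*} [Field F] {n : ℕ}

/-- The pivot-set of a matrix: the maximal elements of the support
under the componentwise (product) order on indices. -/
def Piv (M : Matrix (Fin n) (Fin n) F) : Set (Fin n × Fin n) :=
  {p | M p.1 p.2 ≠ 0 ∧ ∀ q : Fin n × Fin n, p < q → M q.1 q.2 = 0}

/-- Upper triangular matrix. -/
def UpperTri (G : Matrix (Fin n) (Fin n) F) : Prop := ∀ i j : Fin n, j < i → G i j = 0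

/-- `M i j` is the last (largest row index) nonzero entry of column `j`. -/
def IsLast (M : Matrix (Fin n) (Fin n) F) (i j : Fin n) : Prop :=
  M i j ≠ 0 ∧ ∀ i' : Fin n, i < i' → M i' j = 0

/-- Reduced reverse column echelon form: (CE1), (CE2), (CE3). -/
def IsRRCEF (M : Matrix (Fin n) (Fin n) F) : Prop :=
  (∀ j j' : Fin n, j ≤ j' → (∃ i, M i j' ≠ 0) → ∃ i, M i j ≠ 0) ∧
  (∀ i j i' j' : Fin n, IsLast M i j → IsLast M i' j' → j < j' → i' < i) ∧
  (∀ i j : Fin n, IsLast M i j → M i j = 1 ∧ ∀ j' : Fin n, j' ≠ j → M i j' = 0)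

/-- `D(α)`: elements of the strict down-set of `α` whose row contains no element of `α`. -/
def DSet (α : Set (Fin n × Fin n)) : Set (Fin n × Fin n) :=
  {p | p ∈ Down α ∧ ∀ k : Fin n, (p.1, k) ∉ α}

/-- The generalized wreath product relation attached to an antichain `Y`. -/
def Rrel {X : Type*} [PartialOrder X] {Ω : X → Type*} (Y : Set X) :
    Set ((∀ x, Ω x) × (∀ x, Ω x)) :=
  {ab | (∀ x, x ∉ Y ∪ Down Y → ab.1 x = ab.2 x) ∧ ∀ x ∈ Y, ab.1 x ≠ ab.2 x}

/-- A permutation sending two prescribed points to two prescribed points. -/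
lemma exists_perm {α : Type*} (p q p' q' : α) (h : p = q ↔ p' = q') :
    ∃ e : Equiv.Perm α, e p = p' ∧ e q = q' := by
  classical
  by_cases hpq : p = q
  · subst hpq
    refine ⟨Equiv.swap p p', Equiv.swap_apply_left p p', ?_⟩
    rw [Equiv.swap_apply_left]
    exact h.mp rfl
  · have hpq' : p' ≠ q' := fun hh => hpq (h.mpr hh)
    set f := Equiv.swap p p' with hf
    have hfp : f p = p' := Equiv.swap_apply_left p p'
    have hfq : f q ≠ p' := fun hh => hpq (f.injective (hh.trans hfp.symm)).symm
    refine ⟨f.trans (Equiv.swap (f q) q'), ?_, ?_⟩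
    · simp only [Equiv.trans_apply, hfp]
      exact Equiv.swap_apply_of_ne_of_ne (Ne.symm hfq) hpq'
    · simp only [Equiv.trans_apply]
      exact Equiv.swap_apply_left _ _

lemma notMem_up {X : Type*} [PartialOrder X] {Y : Set X} (hY : IsAntichain (· ≤ ·) Y)
    {x w : X} (hx : x ∉ Y ∪ Down Y ∨ x ∈ Y) (hxw : x < w) :
    w ∉ Y ∪ Down Y := by
  intro hw
  obtain ⟨y, hy, hwy⟩ : ∃ y ∈ Y, w ≤ y := by
    rcases hw with hw | ⟨y, hy, hlt⟩
    · exact ⟨w, hw, le_refl w⟩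
    · exact ⟨y, hy, hlt.le⟩
  have hxy : x < y := lt_of_lt_of_le hxw hwy
  rcases hx with hx | hx
  · exact hx (Or.inr ⟨y, hy, hxy⟩)
  · exact hY hx hy (ne_of_lt hxy) hxy.le

theorem generalized_wreath_product_scheme {X : Type*} [Fintype X] [PartialOrder X]
    [Nonempty X] (Ω : X → Type*) [∀ x, Fintype (Ω x)]
    (h2 : ∀ x, 2 ≤ Fintype.card (Ω x)) :
    (∀ a b : ∀ x, Ω x, ∃! Y : Set X,
        IsAntichain (· ≤ ·) Y ∧ (a, b) ∈ Rrel (Ω := Ω) Y) ∧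
    (∀ a b : ∀ x, Ω x, (a, b) ∈ Rrel (Ω := Ω) (∅ : Set X) ↔ a = b) ∧
    (∀ Y : Set X, IsAntichain (· ≤ ·) Y →
        ∀ a b : ∀ x, Ω x, (a, b) ∈ Rrel (Ω := Ω) Y ↔ (b, a) ∈ Rrel (Ω := Ω) Y) ∧
    (∀ Y Z W : Set X, IsAntichain (· ≤ ·) Y → IsAntichain (· ≤ ·) Z →
        IsAntichain (· ≤ ·) W →
        ∀ a b a' b' : ∀ x, Ω x,
          (a, b) ∈ Rrel (Ω := Ω) W → (a', b') ∈ Rrel (Ω := Ω) W →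
          Set.ncard {c : ∀ x, Ω x | (a, c) ∈ Rrel (Ω := Ω) Y ∧ (c, b) ∈ Rrel (Ω := Ω) Z} =
          Set.ncard {c : ∀ x, Ω x | (a', c) ∈ Rrel (Ω := Ω) Y ∧ (c, b') ∈ Rrel (Ω := Ω) Z}) := by
  classical
  refine ⟨?_, ?_, ?_, ?_⟩
  · -- partition: unique antichain
    intro a b
    set S : Set X := {x | a x ≠ b x} with hS
    refine ⟨{x | x ∈ S ∧ ∀ z ∈ S, ¬ x < z}, ⟨?_, ?_, ?_⟩, ?_⟩
    · -- antichain
      intro x hx y hy hne hle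
      exact hx.2 y hy.1 (lt_of_le_of_ne hle hne)
    · -- first condition of Rrel
      intro x hx
      by_contra hne
      obtain ⟨m, hxm, hm⟩ := Finite.exists_le_maximal (p := fun z => z ∈ S) hne
      have hmmax : m ∈ S ∧ ∀ z ∈ S, ¬ m < z :=
        ⟨hm.1, fun z hz hlt => absurd (hm.2 hz hlt.le) (not_le_of_gt hlt)⟩
      rcases eq_or_lt_of_le hxm with rfl | hlt
      · exact hx (Or.inl hmmax)
      · exact hx (Or.inr ⟨m, hmmax, hlt⟩)
    · -- second condition of Rrel
      exact fun x hx => hx.1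
    · -- uniqueness
      rintro Y' ⟨hY', h1, h2'⟩
      ext y
      simp only [Set.mem_setOf_eq]
      constructor
      · intro hy
        have hyS : y ∈ S := h2' y hy
        refine ⟨hyS, fun z hz hlt => ?_⟩
        have : z ∈ Y' ∪ Down Y' := by
          by_contra hzn
          exact hz (h1 z hzn)
        rcases this with hz' | ⟨y'', hy'', hzy⟩
        · exact hY' hy hz' (ne_of_lt hlt) hlt.le
        · exact hY' hy hy'' (ne_of_lt (hlt.trans hzy)) (hlt.trans hzy).le
      · rintro ⟨hyS, hymax⟩
        have : y ∈ Y' ∪ Down Y' := by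
          by_contra hzn
          exact hyS (h1 y hzn)
        rcases this with hy' | ⟨y'', hy'', hzy⟩
        · exact hy'
        · exact absurd hzy (hymax y'' (h2' y'' hy''))
  · -- R ∅ is the diagonal
    intro a b
    constructor
    · rintro ⟨h1, _⟩
      funext x
      refine h1 x ?_
      rintro (h | ⟨y, hy, _⟩)
      · exact Set.notMem_empty _ h
      · exact Set.notMem_empty _ hy
    · rintro rfl
      exact ⟨fun x _ => rfl, fun x hx => absurd hx (Set.notMem_empty x)⟩
  · -- symmetry
    intro Y _ a b
    constructor <;>
      exact fun h => ⟨fun x hx => (h.1 x hx).symm, fun x hx => (h.2 x hx).symm⟩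
  · -- intersection numbers
    intro Y Z W hY hZ hW a b a' b' hab hab'
    by_cases hcase : ∀ w ∈ W, w ∈ (Y ∪ Down Y) ∪ (Z ∪ Down Z)
    · -- construct a bijection coordinatewise
      have key : ∀ x, (x ∉ Y ∪ Down Y ∨ x ∈ Y) → (x ∉ Z ∪ Down Z ∨ x ∈ Z) →
          (a x = b x ↔ a' x = b' x) := by
        intro x hx1 hx2
        by_cases hxW : x ∈ W
        · exact iff_of_false (hab.2 x hxW) (hab'.2 x hxW)
        by_cases hxD : x ∈ Down W
        · obtain ⟨w, hwW, hxw⟩ := hxD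
          refine absurd (hcase w hwW) ?_
          rintro (h | h)
          · exact notMem_up hY hx1 hxw h
          · exact notMem_up hZ hx2 hxw h
        · have hnot : x ∉ W ∪ Down W := by
            rintro (h | h)
            exacts [hxW h, hxD h]
          exact iff_of_true (hab.1 x hnot) (hab'.1 x hnot)
      have he : ∀ x, ∃ e : Equiv.Perm (Ω x),
          ((x ∉ Y ∪ Down Y ∨ x ∈ Y) → e (a x) = a' x) ∧
          ((x ∉ Z ∪ Down Z ∨ x ∈ Z) → e (b x) = b' x) := by
        intro x
        by_cases h1 : x ∉ Y ∪ Down Y ∨ x ∈ Y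
        · by_cases hh2 : x ∉ Z ∪ Down Z ∨ x ∈ Z
          · obtain ⟨e, he1, he2⟩ := exists_perm (a x) (b x) (a' x) (b' x) (key x h1 hh2)
            exact ⟨e, fun _ => he1, fun _ => he2⟩
          · obtain ⟨e, he1, _⟩ := exists_perm (a x) (a x) (a' x) (a' x) (iff_of_true rfl rfl)
            exact ⟨e, fun _ => he1, fun h => absurd h hh2⟩
        · by_cases hh2 : x ∉ Z ∪ Down Z ∨ x ∈ Z
          · obtain ⟨e, he1, _⟩ := exists_perm (b x) (b x) (b' x) (b' x) (iff_of_true rfl rfl)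
            exact ⟨e, fun h => absurd h h1, fun _ => he1⟩
          · exact ⟨Equiv.refl _, fun h => absurd h h1, fun h => absurd h hh2⟩
      choose e he1 he2 using he
      set E : (∀ x, Ω x) ≃ (∀ x, Ω x) := Equiv.piCongrRight e with hE
      have hEc : ∀ (c : ∀ x, Ω x) (x : X), E c x = e x (c x) := fun _ _ => rfl
      have hiff : ∀ c, ((a, c) ∈ Rrel (Ω := Ω) Y ∧ (c, b) ∈ Rrel (Ω := Ω) Z) ↔
          ((a', E c) ∈ Rrel (Ω := Ω) Y ∧ (E c, b') ∈ Rrel (Ω := Ω) Z) := by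
        intro c
        have keyA : ∀ x, (x ∉ Y ∪ Down Y ∨ x ∈ Y) → (a x = c x ↔ a' x = E c x) := by
          intro x hx
          rw [hEc, ← he1 x hx]
          exact ((e x).apply_eq_iff_eq).symm
        have keyB : ∀ x, (x ∉ Z ∪ Down Z ∨ x ∈ Z) → (c x = b x ↔ E c x = b' x) := by
          intro x hx
          rw [hEc, ← he2 x hx]
          exact ((e x).apply_eq_iff_eq).symm
        simp only [Rrel, Set.mem_setOf_eq]
        refine and_congr (and_congr ?_ ?_) (and_congr ?_ ?_)
        · exact forall_congr' fun x => imp_congr_right fun hx => keyA x (Or.inl hx)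
        · exact forall_congr' fun x => imp_congr_right fun hx => not_congr (keyA x (Or.inr hx))
        · exact forall_congr' fun x => imp_congr_right fun hx => keyB x (Or.inl hx)
        · exact forall_congr' fun x => imp_congr_right fun hx => not_congr (keyB x (Or.inr hx))
      have himg : {c : ∀ x, Ω x | (a', c) ∈ Rrel (Ω := Ω) Y ∧ (c, b') ∈ Rrel (Ω := Ω) Z}
          = E '' {c : ∀ x, Ω x | (a, c) ∈ Rrel (Ω := Ω) Y ∧ (c, b) ∈ Rrel (Ω := Ω) Z} := by
        ext d
        rw [Set.mem_image]
        constructor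
        · intro hd
          exact ⟨E.symm d, (hiff (E.symm d)).mpr (by rwa [E.apply_symm_apply]),
            E.apply_symm_apply d⟩
        · rintro ⟨c, hc, rfl⟩
          exact (hiff c).mp hc
      rw [himg, Set.ncard_image_of_injective _ E.injective]
    · -- both sets are empty
      push_neg at hcase
      obtain ⟨w, hwW, hw⟩ := hcase
      have hE : ∀ u v : ∀ x, Ω x, (u, v) ∈ Rrel (Ω := Ω) W →
          {c : ∀ x, Ω x | (u, c) ∈ Rrel (Ω := Ω) Y ∧ (c, v) ∈ Rrel (Ω := Ω) Z} = ∅ := by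
        intro u v huv
        ext c
        simp only [Set.mem_setOf_eq, Set.mem_empty_iff_false, iff_false]
        rintro ⟨hc1, hc2⟩
        have e1 : u w = c w := hc1.1 w fun h => hw (Or.inl h)
        have e2 : c w = v w := hc2.1 w fun h => hw (Or.inr h)
        exact huv.2 w hwW (e1.trans e2)
      rw [hE a b hab, hE a' b' hab']

end SchubertCell
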